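/- Let S be a commutative, cancellative monoid, s ∈ S, and m ∈ 𝒜(S) with s − m ∈ S and L(s) finite. If ℓ(s) ≠ ℓ(s − m) + 1, then for every finitely supported tuple (c_a) ∈ ℕ^{𝒜(S_red)∖{[m]}} such that s is associate to φ_S(c_a) and |(c_a)| = ℓ(s), and for every (c_a') ∈ MinRepl_m(S) with (c_a') ≤ (c_a) coordinatewise, one has ℓ(φ_S(c_a')) ≠ ℓ(−m + φ_S(c_a')) + 1. -/

import Mathlib

namespace Paper

/-- The additive congruence on `S` identifying associate elements
(`s ∼ t` iff `s + u = t` for some additive unit `u`). -/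
def assocCon (S : Type*) [AddCancelCommMonoid S] : AddCon S where
  r s t := ∃ u : AddUnits S, s + (u : S) = t
  iseqv := by
    refine ⟨fun s => ⟨0, by simp⟩, ?_, ?_⟩
    · rintro s t ⟨u, rfl⟩
      exact ⟨-u, by rw [add_assoc, AddUnits.add_neg, add_zero]⟩
    · rintro s t w ⟨u, rfl⟩ ⟨v, rfl⟩
      exact ⟨u + v, by rw [AddUnits.val_add, add_assoc]⟩
  add' := by
    rintro a b c d ⟨u, rfl⟩ ⟨v, rfl⟩
    refine ⟨u + v, ?_⟩
    rw [AddUnits.val_add]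
    abel

/-- The reduced monoid `S_red = S / U(S)`. -/
abbrev Red (S : Type*) [AddCancelCommMonoid S] := (assocCon S).Quotient

variable {S : Type*} [AddCancelCommMonoid S]

/-- The class `[s]` of `s` in `S_red`. -/
def cls (s : S) : Red S := (assocCon S).mk' s

/-- `a` is an atom: a nonzero nonunit such that in any decomposition
`b + c = a`, one of `b`, `c` is a unit. -/
def IsAddAtom {M : Type*} [AddMonoid M] (a : M) : Prop :=
  a ≠ 0 ∧ ¬ IsAddUnit a ∧ ∀ b c : M, b + c = a → IsAddUnit b ∨ IsAddUnit c

/-- The length `|(c_a)|` of a tuple. -/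
def flen (c : Red S →₀ ℕ) : ℕ := c.sum fun _ n => n

/-- The factorization homomorphism `φ_S`. -/
def phi (c : Red S →₀ ℕ) : Red S := c.sum fun x n => n • x

/-- The set of factorizations `Z(s)`: finitely supported tuples indexed by the atoms
of `S_red` summing to `[s]`. -/
def ZSet (s : S) : Set (Red S →₀ ℕ) :=
  {c | (∀ x ∈ c.support, IsAddAtom x) ∧ phi c = cls s}

/-- The longest factorization length `L(s)`. -/
noncomputable def lenL (s : S) : ℕ := sSup (flen '' ZSet s)

/-- The shortest factorization length `ℓ(s)`. -/
noncomputable def lenl (s : S) : ℕ := sInf (flen '' ZSet s)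

/-- `L(s)` is (defined and) finite. -/
def LFinite (s : S) : Prop := (ZSet s).Nonempty ∧ BddAbove (flen '' ZSet s)

/-- `Repl_m(S)`: tuples over the atoms of `S_red` other than `[m]` whose evaluation,
after subtracting `m`, stays in `S`. -/
def ReplSet (m : S) : Set (Red S →₀ ℕ) :=
  {c | (∀ x ∈ c.support, IsAddAtom x ∧ x ≠ cls m) ∧ ∃ s t : S, cls s = phi c ∧ m + t = s}

/-- `MinRepl_m(S)`: the minimal elements of `Repl_m(S)` under the coordinatewise order. -/
def MinReplSet (m : S) : Set (Red S →₀ ℕ) :=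
  {c ∈ ReplSet m | ∀ c' ∈ ReplSet m, c' ≤ c → c' = c}

lemma cls_add (a b : S) : cls (a + b) = cls a + cls b := map_add _ _ _

lemma cls_zero : cls (0:S) = 0 := map_zero _

lemma cls_eq_iff {a b : S} : cls a = cls b ↔ ∃ u : AddUnits S, a + u = b := AddCon.eq _

lemma cls_surjective : Function.Surjective (cls (S := S)) := fun x => AddCon.mk'_surjective x

lemma red_cancel {x y z : Red S} (h : x + y = x + z) : y = z := by
  obtain ⟨a, rfl⟩ := cls_surjective x
  obtain ⟨b, rfl⟩ := cls_surjective y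
  obtain ⟨c, rfl⟩ := cls_surjective z
  rw [← cls_add, ← cls_add, cls_eq_iff] at h
  obtain ⟨u, hu⟩ := h
  rw [cls_eq_iff]
  exact ⟨u, by apply add_left_cancel (a := a); rw [← add_assoc]; exact hu⟩

lemma isAddUnit_iff_cls {a : S} : IsAddUnit a ↔ cls a = 0 := by
  constructor
  · rintro ⟨u, rfl⟩
    rw [← cls_zero, cls_eq_iff]
    exact ⟨-u, by simp⟩
  · intro h
    rw [← cls_zero, cls_eq_iff] at h
    obtain ⟨u, hu⟩ := h
    exact IsAddUnit.of_add_eq_zero _ hu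

lemma red_isAddUnit_iff {x : Red S} : IsAddUnit x ↔ x = 0 := by
  constructor
  · rintro ⟨u, rfl⟩
    obtain ⟨a, ha⟩ := cls_surjective (u : Red S)
    obtain ⟨b, hb⟩ := cls_surjective (((-u : AddUnits (Red S)) : Red S))
    have : cls (a + b) = 0 := by rw [cls_add, ha, hb]; simp
    rw [← isAddUnit_iff_cls] at this
    have ha' : IsAddUnit a := isAddUnit_of_add_isAddUnit_left this
    rw [← ha]
    exact isAddUnit_iff_cls.mp ha'
  · rintro rfl; exact isAddUnit_zero

lemma atom_cls {m : S} (hm : IsAddAtom m) : IsAddAtom (cls m) := by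
  obtain ⟨h0, hu, hsplit⟩ := hm
  refine ⟨?_, ?_, ?_⟩
  · intro h
    exact hu (isAddUnit_iff_cls.mpr h)
  · intro h
    exact hu (isAddUnit_iff_cls.mpr (red_isAddUnit_iff.mp h))
  · intro x y hxy
    obtain ⟨a, rfl⟩ := cls_surjective x
    obtain ⟨b, rfl⟩ := cls_surjective y
    rw [← cls_add, cls_eq_iff] at hxy
    obtain ⟨u, hu'⟩ := hxy
    rcases hsplit a (b + u) (by rw [← add_assoc]; exact hu') with h | h
    · exact Or.inl (red_isAddUnit_iff.mpr (isAddUnit_iff_cls.mp h))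
    · refine Or.inr (red_isAddUnit_iff.mpr (isAddUnit_iff_cls.mp ?_))
      have := h.add (-u : AddUnits S).isAddUnit
      rwa [add_assoc, AddUnits.add_neg, add_zero] at this

lemma phi_add (c d : Red S →₀ ℕ) : phi (c + d) = phi c + phi d :=
  Finsupp.sum_add_index' (fun a => zero_smul _ _) (fun a b₁ b₂ => add_smul _ _ _)

lemma flen_add (c d : Red S →₀ ℕ) : flen (c + d) = flen c + flen d :=
  Finsupp.sum_add_index' (fun _ => rfl) (fun _ _ _ => rfl)

lemma phi_single_one (x : Red S) : phi (Finsupp.single x 1) = x := by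
  simp [phi, Finsupp.sum_single_index]

lemma flen_single_one (x : Red S) : flen (Finsupp.single x 1) = 1 := by
  simp [flen, Finsupp.sum_single_index]

lemma lenl_le {s : S} {c : Red S →₀ ℕ} (hc : c ∈ ZSet s) : lenl s ≤ flen c :=
  Nat.sInf_le ⟨c, hc, rfl⟩

lemma exists_min {s : S} (h : (ZSet s).Nonempty) : ∃ c ∈ ZSet s, flen c = lenl s := by
  obtain ⟨c, hc, hcl⟩ := Nat.sInf_mem (h.image flen)
  exact ⟨c, hc, hcl⟩

lemma eq_single_of_flen_one {z : Red S →₀ ℕ} (h : flen z = 1) :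
    ∃ x, z = Finsupp.single x 1 := by
  classical
  have hne : z.support.Nonempty := by
    rcases Finset.eq_empty_or_nonempty z.support with he | hne
    · rw [flen, Finsupp.sum, he, Finset.sum_empty] at h; exact absurd h.symm one_ne_zero
    · exact hne
  obtain ⟨x, hx⟩ := hne
  have hsum : ∑ y ∈ z.support, z y = 1 := h
  have h1 : z x ≤ 1 := hsum ▸ Finset.single_le_sum (fun _ _ => Nat.zero_le _) hx
  have h2 : 1 ≤ z x := Nat.one_le_iff_ne_zero.mpr (Finsupp.mem_support_iff.mp hx)
  have hzx : z x = 1 := le_antisymm h1 h2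
  have herase : ∑ y ∈ z.support.erase x, z y = 0 := by
    have := Finset.add_sum_erase _ z hx
    omega
  have hsub : z.support ⊆ {x} := by
    intro y hy
    rcases eq_or_ne y x with rfl | hyx
    · exact Finset.mem_singleton_self _
    · exfalso
      have : z y = 0 := (Finset.sum_eq_zero_iff).mp herase y (Finset.mem_erase.mpr ⟨hyx, hy⟩)
      exact Finsupp.mem_support_iff.mp hy this
  refine ⟨x, ?_⟩
  rw [Finsupp.support_subset_singleton.mp hsub, hzx]

theorem statement3 {S : Type*} [AddCancelCommMonoid S] (s m t : S)
    (hm : IsAddAtom m) (ht : m + t = s) (hfin : LFinite s)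
    (hne : lenl s ≠ lenl t + 1) :
    ∀ c : Red S →₀ ℕ, (∀ x ∈ c.support, IsAddAtom x ∧ x ≠ cls m) →
      cls s = phi c → flen c = lenl s →
      ∀ c' ∈ MinReplSet m, c' ≤ c →
        ∀ s' t' : S, cls s' = phi c' → m + t' = s' → lenl s' ≠ lenl t' + 1 := by
  classical
  intro c hcat hcs hclen c' hc' hle s' t' hs' hst' h
  obtain ⟨⟨hc'at, -⟩, -⟩ := hc'
  have hc'Z : c' ∈ ZSet s' := ⟨fun x hx => (hc'at x hx).1, hs'.symm⟩
  have hphic' : phi c' = cls m + cls t' := by rw [← hs', ← hst', cls_add]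
  have hphic : phi c = cls m + cls t := by rw [← hcs, ← ht, cls_add]
  -- Step 1: ZSet t' is nonempty
  have hZt' : (ZSet t').Nonempty := by
    by_contra hemp
    rw [Set.not_nonempty_iff_eq_empty] at hemp
    have ht'0 : lenl t' = 0 := by rw [lenl, hemp, Set.image_empty, Nat.sInf_empty]
    rw [ht'0] at h
    obtain ⟨z, hz, hz1⟩ := exists_min ⟨c', hc'Z⟩
    rw [h] at hz1
    obtain ⟨x, rfl⟩ := eq_single_of_flen_one hz1
    have hx : IsAddAtom x :=
      hz.1 x (by rw [Finsupp.support_single_ne_zero _ one_ne_zero]; exact Finset.mem_singleton_self _)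
    have hxe : cls m + cls t' = x := by
      rw [← hphic', ← hs', ← hz.2, phi_single_one]
    rcases hx.2.2 (cls m) (cls t') hxe with hu | hu
    · exact (atom_cls hm).2.1 hu
    · have ht'z : cls t' = 0 := red_isAddUnit_iff.mp hu
      have : (0 : Red S →₀ ℕ) ∈ ZSet t' := by
        refine ⟨by simp, ?_⟩
        rw [phi, Finsupp.sum_zero_index, ht'z]
      rw [hemp] at this
      exact this
  -- Step 2: minimal factorization of t'
  obtain ⟨z', hz', hz'len⟩ := exists_min hZt'
  -- Step 3: d = (c - c') + z' is a factorization of t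
  have hdZ : (c - c') + z' ∈ ZSet t := by
    constructor
    · intro x hx
      rcases Finset.mem_union.mp (Finsupp.support_add hx) with h1 | h1
      · exact (hcat x (Finsupp.support_tsub h1)).1
      · exact hz'.1 x h1
    · refine red_cancel (x := cls m) ?_
      have e1 : phi (c - c') + phi c' = phi c := by
        rw [← phi_add, tsub_add_cancel_of_le hle]
      calc cls m + phi ((c - c') + z')
          = cls m + (phi (c - c') + cls t') := by rw [phi_add, hz'.2]
        _ = phi (c - c') + (cls m + cls t') := by abel
        _ = phi (c - c') + phi c' := by rw [hphic']
        _ = phi c := e1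
        _ = cls m + cls t := hphic
  -- Step 4: length bookkeeping
  have hflen : flen (c - c') + flen c' = flen c := by
    rw [← flen_add, tsub_add_cancel_of_le hle]
  have h1 : lenl t ≤ flen (c - c') + lenl t' := by
    have := lenl_le hdZ
    rwa [flen_add, hz'len] at this
  have h2 : lenl s' ≤ flen c' := lenl_le hc'Z
  -- Step 5: lenl s ≤ lenl t + 1
  obtain ⟨w, hw, hwlen⟩ := exists_min ⟨_, hdZ⟩
  have heZ : w + Finsupp.single (cls m) 1 ∈ ZSet s := by
    constructor
    · intro x hx
      rcases Finset.mem_union.mp (Finsupp.support_add hx) with h1 | h1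
      · exact hw.1 x h1
      · rw [Finsupp.support_single_ne_zero _ one_ne_zero] at h1
        rw [Finset.mem_singleton.mp h1]
        exact atom_cls hm
    · rw [phi_add, hw.2, phi_single_one, ← cls_add, add_comm, ht]
  have h3 : lenl s ≤ lenl t + 1 := by
    have := lenl_le heZ
    rwa [flen_add, hwlen, flen_single_one] at this
  omega


end Paper
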